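/- Let G be a topological group and L a subgroup of G whose identity component L₀ is an open subgroup of L. Let H, K⁺, K⁻ be subgroups of L such that H ⊆ K⁺, H ⊆ K⁻, the subgroup K⁺ is connected, and the left coset space K⁻/H, equipped with the quotient topology, is connected. Then L₀ is a connected subgroup of G containing both K⁺ and K⁻; in particular, if L is a proper subgroup of G, then there is a connected proper subgroup of G containing both K⁺ and K⁻. -/

import Mathlib

/-- If `L` is a subgroup of a topological group `G` whose identity component `L₀` is open
in `L` (with the subspace topology), and `H, K⁺, K⁻` are subgroups contained in `L` with
`H ⊆ K⁺`, `H ⊆ K⁻`, `K⁺` connected, and the coset space `K⁻/H` (quotient topology)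
connected, then the image `L₀` of the identity component of `L` in `G` is a connected
subgroup of `G` containing both `K⁺` and `K⁻`; in particular, if `L` is proper, then a
connected proper subgroup of `G` contains both `K⁺` and `K⁻`. -/
theorem nonprimitive_connected_intermediate_subgroup
    {G : Type*} [Group G] [TopologicalSpace G] [IsTopologicalGroup G]
    (L H Kp Km : Subgroup G) (hKpL : Kp ≤ L) (hKmL : Km ≤ L)
    (hHKp : H ≤ Kp) (hHKm : H ≤ Km)
    (hopen : IsOpen ((Subgroup.connectedComponentOfOne L : Subgroup L) : Set L))
    (hKpconn : IsConnected (Kp : Set G))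
    (hconn : ConnectedSpace (Km ⧸ H.subgroupOf Km)) :
    IsConnected (((Subgroup.connectedComponentOfOne L).map L.subtype : Subgroup G) : Set G) ∧
      Kp ≤ (Subgroup.connectedComponentOfOne L).map L.subtype ∧
      Km ≤ (Subgroup.connectedComponentOfOne L).map L.subtype ∧
      (L ≠ ⊤ → ∃ L' : Subgroup G, L' ≠ ⊤ ∧ IsConnected (L' : Set G) ∧ Kp ≤ L' ∧ Km ≤ L') := by
  set L0 : Subgroup G := (Subgroup.connectedComponentOfOne L).map L.subtype with hL0def
  have hCset : ((Subgroup.connectedComponentOfOne L : Subgroup L) : Set L)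
      = connectedComponent (1 : L) := rfl
  -- connectedness of L0
  have hconnL0 : IsConnected (L0 : Set G) := by
    have h1 : IsConnected (connectedComponent (1 : L)) := isConnected_connectedComponent
    have h2 := h1.image (L.subtype) continuous_subtype_val.continuousOn
    have heq : (L0 : Set G) = L.subtype '' connectedComponent (1 : L) := by
      ext x
      simp [hL0def, Subgroup.mem_map, Set.mem_image, Subgroup.connectedComponentOfOne]
    rw [heq]; exact h2
  -- Kp ≤ L0
  have hKpL0 : Kp ≤ L0 := by
    haveI : ConnectedSpace (Kp : Set G) := isConnected_iff_connectedSpace.mp hKpconn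
    set f : ↥(Kp : Set G) → L := fun x => ⟨x.1, hKpL x.2⟩ with hf
    have hfc : Continuous f := Continuous.subtype_mk continuous_subtype_val _
    have hr : IsConnected (Set.range f) := isConnected_range hfc
    have h1r : (1 : L) ∈ Set.range f := ⟨⟨1, Kp.one_mem⟩, rfl⟩
    have hsub : Set.range f ⊆ connectedComponent (1 : L) :=
      hr.isPreconnected.subset_connectedComponent h1r
    intro x hx
    exact ⟨⟨x, hKpL hx⟩, hsub ⟨⟨x, hx⟩, rfl⟩, rfl⟩
  -- Km ≤ L0
  have hKmL0 : Km ≤ L0 := by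
    set j : Km → L := fun k => ⟨k.1, hKmL k.2⟩ with hj
    have hjc : Continuous j := Continuous.subtype_mk continuous_subtype_val _
    set S : Set Km := j ⁻¹' (connectedComponent (1 : L)) with hS
    have hSopen : IsOpen S := hopen.preimage hjc
    have hSclosed : IsClosed S := isClosed_connectedComponent.preimage hjc
    have h1S : (1 : Km) ∈ S := mem_connectedComponent
    -- saturation
    have hsat : ∀ (k : Km) (h : Km), h ∈ H.subgroupOf Km → k ∈ S → k * h ∈ S := by
      intro k h hh hk
      have hhKp : (h : G) ∈ Kp := hHKp hh
      have hhC : j h ∈ connectedComponent (1 : L) := by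
        obtain ⟨y, hy, hyeq⟩ := hKpL0 hhKp
        have : y = j h := Subtype.ext hyeq
        rwa [← this]
      exact mul_mem_connectedComponent_one hk hhC
    -- descend to quotient
    set V : Set (Km ⧸ H.subgroupOf Km) := QuotientGroup.mk '' S with hV
    have hpre : QuotientGroup.mk ⁻¹' V = S := by
      ext x
      constructor
      · rintro ⟨s, hs, heq⟩
        have : s⁻¹ * x ∈ H.subgroupOf Km := QuotientGroup.eq.mp heq
        have := hsat s _ this hs
        simpa [mul_inv_cancel_left] using this
      · intro hx
        exact ⟨x, hx, rfl⟩
    have hq := QuotientGroup.isQuotientMap_mk (H.subgroupOf Km)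
    have hVopen : IsOpen V := by
      rw [hq.isOpen_preimage.symm] at *
      rw [hpre]; exact hSopen
    have hVclosed : IsClosed V := by
      rw [← hq.isClosed_preimage, hpre]; exact hSclosed
    have hVuniv : V = Set.univ := by
      rcases isClopen_iff.mp ⟨hVclosed, hVopen⟩ with h | h
      · exact absurd h (Set.nonempty_iff_ne_empty.mp ⟨QuotientGroup.mk 1, ⟨1, h1S, rfl⟩⟩)
      · exact h
    have hSuniv : S = Set.univ := by
      rw [← hpre, hVuniv, Set.preimage_univ]
    intro x hx
    have : (⟨x, hx⟩ : Km) ∈ S := hSuniv ▸ Set.mem_univ _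
    exact ⟨j ⟨x, hx⟩, this, rfl⟩
  refine ⟨hconnL0, hKpL0, hKmL0, fun hL => ⟨L0, ?_, hconnL0, hKpL0, hKmL0⟩⟩
  intro htop
  apply hL
  rw [eq_top_iff]
  intro x _
  rcases (htop ▸ Subgroup.mem_top x : x ∈ L0) with ⟨y, _, rfl⟩
  exact y.2
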